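/- For all positive reals a and b, 5·S − 3·N3 − 2·P5 ≥ 0, i.e. (P5 + 9·N3)/10 ≤ (S + 3·N3)/4, where S = √((a²+b²)/2), N3 = (a + √(ab) + b)/3, and P5 = ((a+b)/(√a+√b))². -/

import Mathlib

theorem stmt_8 (a b : ℝ) (ha : 0 < a) (hb : 0 < b) :
    let S := Real.sqrt ((a^2+b^2)/2)
    let N3 := (a + Real.sqrt (a*b) + b)/3
    let P5 := ((a+b)/(Real.sqrt a + Real.sqrt b))^2
    5*S - 3*N3 - 2*P5 ≥ 0 := by
  intro S N3 P5
  set x := Real.sqrt a with hxdef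
  set y := Real.sqrt b with hydef
  have hx : 0 < x := Real.sqrt_pos.mpr ha
  have hy : 0 < y := Real.sqrt_pos.mpr hb
  have hxa : x ^ 2 = a := Real.sq_sqrt ha.le
  have hyb : y ^ 2 = b := Real.sq_sqrt hb.le
  have hab : Real.sqrt (a * b) = x * y := Real.sqrt_mul ha.le b
  have hs0 : 0 ≤ S := Real.sqrt_nonneg _
  have hs2 : S ^ 2 = (a ^ 2 + b ^ 2) / 2 := Real.sq_sqrt (by positivity)
  have hs2' : 2 * S ^ 2 = x ^ 4 + y ^ 4 := by
    rw [hs2, ← hxa, ← hyb]; ring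
  have hxy : 0 < x + y := by linarith
  have hxy2 : (0 : ℝ) < (x + y) ^ 2 := by positivity
  -- key squared inequality
  have key : 25 * S ^ 2 * (x + y) ^ 4 ≥
      ((x ^ 2 + x * y + y ^ 2) * (x + y) ^ 2 + 2 * (x ^ 2 + y ^ 2) ^ 2) ^ 2 := by
    have hid : 25 * S ^ 2 * (x + y) ^ 4 -
        ((x ^ 2 + x * y + y ^ 2) * (x + y) ^ 2 + 2 * (x ^ 2 + y ^ 2) ^ 2) ^ 2 =
        (x - y) ^ 2 * (104 * (x * y) ^ 3 + 164 * (x * y) ^ 2 * (x ^ 2 + y ^ 2)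
          + 78 * (x * y) * (x ^ 2 + y ^ 2) ^ 2 + 7 * (x ^ 2 + y ^ 2) ^ 3) / 2 := by
      linear_combination ((x + y) ^ 4 * 25 / 2) * hs2'
    nlinarith [sq_nonneg (x - y), mul_pos hx hy, sq_nonneg (x + y),
      mul_nonneg (sq_nonneg (x - y)) (by positivity :
        (0:ℝ) ≤ 104 * (x * y) ^ 3 + 164 * (x * y) ^ 2 * (x ^ 2 + y ^ 2)
          + 78 * (x * y) * (x ^ 2 + y ^ 2) ^ 2 + 7 * (x ^ 2 + y ^ 2) ^ 3)]
  have hRpos : (0:ℝ) < (x ^ 2 + x * y + y ^ 2) * (x + y) ^ 2 + 2 * (x ^ 2 + y ^ 2) ^ 2 := by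
    positivity
  have hApos : 0 ≤ 5 * S * (x + y) ^ 2 := by positivity
  have hlin : 5 * S * (x + y) ^ 2 ≥
      (x ^ 2 + x * y + y ^ 2) * (x + y) ^ 2 + 2 * (x ^ 2 + y ^ 2) ^ 2 := by
    nlinarith [key, hRpos, hApos]
  have hP5 : P5 = 2 * (x ^ 2 + y ^ 2) ^ 2 / (x + y) ^ 2 / 2 := by
    show ((a + b) / (x + y)) ^ 2 = _
    rw [← hxa, ← hyb]
    field_simp
  have hdiv : 2 * (x ^ 2 + y ^ 2) ^ 2 / (x + y) ^ 2 ≤ 5 * S - (x ^ 2 + x * y + y ^ 2) := by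
    rw [div_le_iff₀ hxy2]
    nlinarith [hlin]
  have hN3 : 3 * N3 = x ^ 2 + x * y + y ^ 2 := by
    show 3 * ((a + Real.sqrt (a*b) + b) / 3) = _
    rw [hab, ← hxa, ← hyb]; ring
  have : 2 * P5 = 2 * (x ^ 2 + y ^ 2) ^ 2 / (x + y) ^ 2 := by
    rw [hP5]; ring
  linarith [hdiv]
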